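/- Let P be compact and f₁,…,f_m continuously differentiable. If x^k → x̄ in P and θ(x^k) → 0, where θ(x) := min_{u∈P} max_j ⟨∇f_j(x), u − x⟩, then θ(x̄) = 0; i.e., θ is continuous (as a function of x) on P. -/

import Mathlib

open scoped RealInnerProductSpace

theorem gap_limit_zero {n m : ℕ} [NeZero m]
    (P : Set (EuclideanSpace ℝ (Fin n))) (hP : Convex ℝ P)
    (hPc : IsCompact P) (hPne : P.Nonempty)
    (f : Fin m → EuclideanSpace ℝ (Fin n) → ℝ)
    (g : Fin m → EuclideanSpace ℝ (Fin n) → EuclideanSpace ℝ (Fin n))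
    (hgrad : ∀ j x, HasGradientAt (f j) (g j x) x)
    (hgcont : ∀ j, Continuous (g j))
    (x : ℕ → EuclideanSpace ℝ (Fin n)) (hxP : ∀ k, x k ∈ P)
    (xbar : EuclideanSpace ℝ (Fin n)) (hxbar : xbar ∈ P)
    (hconv : Filter.Tendsto x Filter.atTop (nhds xbar))
    (hθ : Filter.Tendsto
      (fun k => sInf {r : ℝ | ∃ u ∈ P, r = ⨆ j : Fin m, ⟪g j (x k), u - x k⟫})
      Filter.atTop (nhds 0)) :
    sInf {r : ℝ | ∃ u ∈ P, r = ⨆ j : Fin m, ⟪g j xbar, u - xbar⟫} = 0 := by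
  haveI : Nonempty (Fin m) := ⟨⟨0, Nat.pos_of_ne_zero (NeZero.ne m)⟩⟩
  set h : EuclideanSpace ℝ (Fin n) → EuclideanSpace ℝ (Fin n) → ℝ :=
    fun y u => ⨆ j : Fin m, ⟪g j y, u - y⟫ with hh
  -- continuity of h in the pair
  have hcont : Continuous fun p : EuclideanSpace ℝ (Fin n) × EuclideanSpace ℝ (Fin n) =>
      h p.1 p.2 := by
    have : ∀ p : EuclideanSpace ℝ (Fin n) × EuclideanSpace ℝ (Fin n),
        h p.1 p.2 = Finset.univ.sup' Finset.univ_nonempty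
          (fun j : Fin m => ⟪g j p.1, p.2 - p.1⟫) := by
      intro p
      rw [Finset.sup'_univ_eq_ciSup]
    simp only [this]
    apply Continuous.finset_sup'_apply _ (fun j _ => ?_)
    exact Continuous.inner ((hgcont j).comp continuous_fst)
      (continuous_snd.sub continuous_fst)
  -- for each point y, the min over P is attained and equals the sInf
  have key : ∀ y : EuclideanSpace ℝ (Fin n), ∃ u ∈ P,
      (∀ v ∈ P, h y u ≤ h y v) ∧ sInf {r : ℝ | ∃ u ∈ P, r = h y u} = h y u := by
    intro y
    have hc : Continuous (h y) := by
      have := hcont.comp (Continuous.prodMk_right (Y := EuclideanSpace ℝ (Fin n)) y)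
      exact this
    obtain ⟨u, huP, hmin⟩ := hPc.exists_isMinOn hPne hc.continuousOn
    refine ⟨u, huP, fun v hv => hmin hv, le_antisymm ?_ ?_⟩
    · exact csInf_le ⟨h y u, fun r ⟨v, hv, hr⟩ => hr ▸ hmin hv⟩ ⟨u, huP, rfl⟩
    · exact le_csInf ⟨h y u, u, huP, rfl⟩ (fun r ⟨v, hv, hr⟩ => hr ▸ hmin hv)
  obtain ⟨u, huP, hmin, heq⟩ := key xbar
  have hzero : h xbar xbar = 0 := by
    simp [hh, sub_self, inner_zero_right, ciSup_const]
  -- upper bound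
  have hub : sInf {r : ℝ | ∃ u ∈ P, r = h xbar u} ≤ 0 := by
    rw [heq, ← hzero]; exact hmin xbar hxbar
  -- lower bound
  have hle : ∀ k, sInf {r : ℝ | ∃ u ∈ P, r = h (x k) u} ≤ h (x k) u := by
    intro k
    obtain ⟨w, hwP, hwmin, -⟩ := key (x k)
    exact csInf_le ⟨h (x k) w, fun r ⟨v, hv, hr⟩ => hr ▸ hwmin v hv⟩ ⟨u, huP, rfl⟩
  have htend : Filter.Tendsto (fun k => h (x k) u) Filter.atTop (nhds (h xbar u)) := by
    exact (hcont.comp (Continuous.prodMk_left (X := EuclideanSpace ℝ (Fin n)) u)).continuousAt.tendsto.comp hconv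
  have hlb : (0 : ℝ) ≤ h xbar u := le_of_tendsto_of_tendsto' hθ htend hle
  rw [heq] at hub ⊢
  exact le_antisymm hub hlb
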